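/- Let β > 1 and let f(x) = x(1 + 2^β x^β) be the left branch of the LSV map T_β. Then the Schwarzian derivative (Sf)(x) = f'''(x)/f'(x) − (3/2)·(f''(x)/f'(x))² is strictly positive for every x in the open interval (0, (1/2)·((β−1)/((1+β)(1+β/2)))^{1/β}). -/

import Mathlib

noncomputable section

open Real MeasureTheory Set Filter

/-- The LSV map `T_γ` on `[0,1]`: `x(1+2^γ x^γ)` on `[0,1/2]`, `2x-1` on `(1/2,1]`. -/
noncomputable def lsv (γ : ℝ) (x : ℝ) : ℝ :=
  if x ≤ 1 / 2 then x * (1 + 2 ^ γ * x ^ γ) else 2 * x - 1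

/-- The left branch of the LSV map. -/
noncomputable def lsvLeft (γ : ℝ) (x : ℝ) : ℝ := x * (1 + 2 ^ γ * x ^ γ)

/-- The random parameter selection: `α` for `ω ∈ [0,p₁)`, `β` for `ω ∈ [p₁,1]`. -/
noncomputable def sel (α β p₁ : ℝ) (ω : ℝ) : ℝ := if ω < p₁ then α else β

/-- The randomizing map `φ` on `[0,1]`. -/
noncomputable def phiMap (p₁ p₂ : ℝ) (ω : ℝ) : ℝ :=
  if ω < p₁ then ω / p₁ else (ω - p₁) / p₂

/-- The skew product `S(x,ω) = (T_{α(ω)}(x), φ(ω))`. -/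
noncomputable def skew (α β p₁ p₂ : ℝ) (z : ℝ × ℝ) : ℝ × ℝ :=
  (lsv (sel α β p₁ z.2) z.1, phiMap p₁ p₂ z.2)

/-- Random iterates: `randIter n ω = T_ω^n = T_{α(φ^{n-1}ω)} ∘ ⋯ ∘ T_{α(ω)}`. -/
noncomputable def randIter (α β p₁ p₂ : ℝ) : ℕ → ℝ → ℝ → ℝ
  | 0, _, x => x
  | n + 1, ω, x => randIter α β p₁ p₂ n (phiMap p₁ p₂ ω) (lsv (sel α β p₁ ω) x)

/-- The deterministic backward orbit `x_n^γ`: `x₀^γ = 1`, `x₁^γ = 1/2`, and for `n ≥ 2`,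
`x_n^γ` is the (unique) point of `(0,1/2]` with `T_γ(x_n^γ) = x_{n-1}^γ`. -/
def IsDetBackOrbit (γ : ℝ) (x : ℕ → ℝ) : Prop :=
  x 0 = 1 ∧ x 1 = 1 / 2 ∧
    ∀ n, 2 ≤ n → x n ∈ Set.Ioc (0 : ℝ) (1 / 2) ∧ lsv γ (x n) = x (n - 1)

/-- The random backward orbit `x_n(ω)`: `x₀(ω) = 1`, `x₁(ω) = 1/2`, and for `n ≥ 2`,
`x_n(ω)` is the (unique) point of `(0,1/2]` with `T_{α(ω)}(x_n(ω)) = x_{n-1}(φω)`. -/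
def IsRandBackOrbit (α β p₁ p₂ : ℝ) (X : ℕ → ℝ → ℝ) : Prop :=
  (∀ ω, X 0 ω = 1) ∧ (∀ ω, X 1 ω = 1 / 2) ∧
    ∀ n, 2 ≤ n → ∀ ω, X n ω ∈ Set.Ioc (0 : ℝ) (1 / 2) ∧
      lsv (sel α β p₁ ω) (X n ω) = X (n - 1) (phiMap p₁ p₂ ω)

/-- The points `x'_n(ω)`: `x'₀(ω) = 1`, `x'₁(ω) = 3/4`, and
`x'_n(ω) = (x_n(φω) + 1)/2` for `n ≥ 2`. -/
def IsRandBackOrbitPrime (p₁ p₂ : ℝ) (X X' : ℕ → ℝ → ℝ) : Prop :=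
  (∀ ω, X' 0 ω = 1) ∧ (∀ ω, X' 1 ω = 3 / 4) ∧
    ∀ n, 2 ≤ n → ∀ ω, X' n ω = (X n (phiMap p₁ p₂ ω) + 1) / 2

/-- First return time of `(x,ω)` to `(1/2,1] × [0,1]` under the skew product. -/
noncomputable def returnTime (α β p₁ p₂ : ℝ) (x ω : ℝ) : ℕ :=
  sInf {k : ℕ | 1 ≤ k ∧ 1 / 2 < randIter α β p₁ p₂ k ω x}

private noncomputable def sg1 (β x : ℝ) : ℝ := 1 + 2 ^ β * ((β + 1) * x ^ β)
private noncomputable def sg2 (β x : ℝ) : ℝ := 2 ^ β * ((β + 1) * (β * x ^ (β - 1)))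
private noncomputable def sg3 (β x : ℝ) : ℝ :=
  2 ^ β * ((β + 1) * (β * ((β - 1) * x ^ (β - 2))))

private lemma hasDerivAt_lsvLeft (β : ℝ) {x : ℝ} (hx : 0 < x) :
    HasDerivAt (lsvLeft β) (sg1 β x) x := by
  have h : HasDerivAt (fun y : ℝ => y ^ β) (β * x ^ (β - 1)) x :=
    Real.hasDerivAt_rpow_const (Or.inl hx.ne')
  have h2 : HasDerivAt (fun y : ℝ => y * (1 + 2 ^ β * y ^ β))
      (1 * (1 + 2 ^ β * x ^ β) + x * (2 ^ β * (β * x ^ (β - 1)))) x :=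
    (hasDerivAt_id x).mul ((h.const_mul ((2:ℝ) ^ β)).const_add 1)
  have hxb : x ^ β = x ^ (β - 1) * x := by
    rw [show β = (β - 1) + 1 by ring, Real.rpow_add hx, Real.rpow_one]; ring_nf
  convert h2 using 1
  · rfl
  unfold sg1; rw [hxb]; ring

private lemma hasDerivAt_sg1 (β : ℝ) {x : ℝ} (hx : 0 < x) :
    HasDerivAt (sg1 β) (sg2 β x) x := by
  have h : HasDerivAt (fun y : ℝ => y ^ β) (β * x ^ (β - 1)) x :=
    Real.hasDerivAt_rpow_const (Or.inl hx.ne')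
  have h2 : HasDerivAt (fun y : ℝ => 1 + 2 ^ β * ((β + 1) * y ^ β))
      (2 ^ β * ((β + 1) * (β * x ^ (β - 1)))) x :=
    (((h.const_mul (β + 1)).const_mul ((2:ℝ) ^ β)).const_add 1)
  exact h2

private lemma hasDerivAt_sg2 (β : ℝ) {x : ℝ} (hx : 0 < x) :
    HasDerivAt (sg2 β) (sg3 β x) x := by
  have h : HasDerivAt (fun y : ℝ => y ^ (β - 1)) ((β - 1) * x ^ (β - 1 - 1)) x :=
    Real.hasDerivAt_rpow_const (Or.inl hx.ne')
  have h2 : HasDerivAt (fun y : ℝ => 2 ^ β * ((β + 1) * (β * y ^ (β - 1))))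
      (2 ^ β * ((β + 1) * (β * ((β - 1) * x ^ (β - 1 - 1))))) x :=
    (((h.const_mul β).const_mul (β + 1)).const_mul ((2:ℝ) ^ β))
  have : β - 1 - 1 = β - 2 := by ring
  rw [this] at h2
  exact h2

private lemma deriv1_eq (β : ℝ) {x : ℝ} (hx : 0 < x) :
    deriv (lsvLeft β) x = sg1 β x := (hasDerivAt_lsvLeft β hx).deriv

private lemma deriv2_eq (β : ℝ) {x : ℝ} (hx : 0 < x) :
    deriv (deriv (lsvLeft β)) x = sg2 β x := by
  have h : deriv (lsvLeft β) =ᶠ[nhds x] sg1 β := by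
    filter_upwards [Ioi_mem_nhds hx] with y hy using deriv1_eq β hy
  rw [h.deriv_eq, (hasDerivAt_sg1 β hx).deriv]

private lemma deriv3_eq (β : ℝ) {x : ℝ} (hx : 0 < x) :
    deriv (deriv (deriv (lsvLeft β))) x = sg3 β x := by
  have h : deriv (deriv (lsvLeft β)) =ᶠ[nhds x] sg2 β := by
    filter_upwards [Ioi_mem_nhds hx] with y hy using deriv2_eq β hy
  rw [h.deriv_eq, (hasDerivAt_sg2 β hx).deriv]

/-- For `β > 1` and the left branch `f(x) = x(1 + 2^β x^β)`, the
Schwarzian derivative of `f` is strictly positive on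
`(0, (1/2)((β−1)/((1+β)(1+β/2)))^{1/β})`. -/
theorem left_branch_positive_schwarzian (β : ℝ) (hβ : 1 < β) :
    ∀ x ∈ Set.Ioo (0 : ℝ)
        ((1 / 2) * ((β - 1) / ((1 + β) * (1 + β / 2))) ^ (1 / β)),
      0 < deriv (deriv (deriv (lsvLeft β))) x / deriv (lsvLeft β) x -
        (3 / 2) * (deriv (deriv (lsvLeft β)) x / deriv (lsvLeft β) x) ^ 2 := by
  intro x hxI
  obtain ⟨hx, hxu⟩ := hxI
  have hβ0 : (0:ℝ) < β := by linarith
  have hc : (0:ℝ) < 2 ^ β := Real.rpow_pos_of_pos two_pos β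
  have hxβ : (0:ℝ) < x ^ β := Real.rpow_pos_of_pos hx β
  have hxβ2 : (0:ℝ) < x ^ (β - 2) := Real.rpow_pos_of_pos hx (β - 2)
  have hden : (0:ℝ) < (1 + β) * (1 + β / 2) := by nlinarith
  have ha : (0:ℝ) < (β - 1) / ((1 + β) * (1 + β / 2)) := by
    apply div_pos (by linarith) hden
  -- bound on x^β
  have hxb : x ^ β < (2 ^ β)⁻¹ * ((β - 1) / ((1 + β) * (1 + β / 2))) := by
    have h1 := Real.rpow_lt_rpow hx.le hxu hβ0
    have h2 : ((1 / 2 : ℝ) * ((β - 1) / ((1 + β) * (1 + β / 2))) ^ (1 / β)) ^ β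
        = (2 ^ β)⁻¹ * ((β - 1) / ((1 + β) * (1 + β / 2))) := by
      rw [Real.mul_rpow (by norm_num) (Real.rpow_nonneg ha.le _),
        ← Real.rpow_mul ha.le, show 1 / β * β = 1 by field_simp, Real.rpow_one]
      congr 1
      rw [show (1 / 2 : ℝ) = 2⁻¹ by norm_num,
        Real.inv_rpow (by norm_num : (0:ℝ) ≤ 2)]
    rw [h2] at h1
    exact h1
  have hA' : 2 ^ β * (β + 1) * (1 + β / 2) * x ^ β < β - 1 := by
    have h3 : (0:ℝ) < 2 ^ β * (β + 1) * (1 + β / 2) := by nlinarith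
    calc 2 ^ β * (β + 1) * (1 + β / 2) * x ^ β
        < 2 ^ β * (β + 1) * (1 + β / 2) *
          ((2 ^ β)⁻¹ * ((β - 1) / ((1 + β) * (1 + β / 2)))) :=
          (mul_lt_mul_of_pos_left hxb h3)
      _ = β - 1 := by field_simp; ring
  have hBB : x ^ (β - 1) * x ^ (β - 1) = x ^ (β - 2) * x ^ β := by
    rw [← Real.rpow_add hx, ← Real.rpow_add hx]; ring_nf
  have hP : (0:ℝ) < sg1 β x := by
    unfold sg1
    nlinarith [mul_pos hc (mul_pos (by linarith : (0:ℝ) < β + 1) hxβ)]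
  have key : 0 < sg3 β x * sg1 β x - 3 / 2 * (sg2 β x) ^ 2 := by
    have h1 : sg3 β x * sg1 β x - 3 / 2 * (sg2 β x) ^ 2
        = (2 ^ β * β * (β + 1) * x ^ (β - 2)) *
          ((β - 1) - 2 ^ β * (β + 1) * (1 + β / 2) * x ^ β) := by
      unfold sg1 sg2 sg3
      rw [pow_two, show (2 ^ β * ((β + 1) * (β * x ^ (β - 1)))) *
          (2 ^ β * ((β + 1) * (β * x ^ (β - 1))))
          = (2 ^ β * (β + 1) * β) ^ 2 * (x ^ (β - 1) * x ^ (β - 1)) by ring, hBB]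
      ring
    rw [h1]
    apply mul_pos (by positivity) (by linarith)
  rw [deriv1_eq β hx, deriv2_eq β hx, deriv3_eq β hx]
  have heq : sg3 β x / sg1 β x - 3 / 2 * (sg2 β x / sg1 β x) ^ 2
      = (sg3 β x * sg1 β x - 3 / 2 * (sg2 β x) ^ 2) / (sg1 β x) ^ 2 := by
    field_simp
  rw [heq]
  exact div_pos key (by positivity)
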